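/- Let T be a densely defined closed positive operator on a complex Hilbert space H. Then m(T) = inf{⟨Tx, x⟩ : x ∈ D(T), ‖x‖ = 1}, i.e. the minimum modulus of T equals its lower numerical bound m_T. -/

import Mathlib

open scoped InnerProductSpace

variable {H : Type*} [NormedAddCommGroup H] [InnerProductSpace ℂ H] [CompleteSpace H]

/-- The minimum modulus `m(T) = inf {‖Tx‖ : x ∈ D(T), ‖x‖ = 1}` of a (possibly unbounded)
operator. -/
noncomputable def minMod (T : H →ₗ.[ℂ] H) : ℝ :=
  sInf {r : ℝ | ∃ x : T.domain, ‖(x : H)‖ = 1 ∧ r = ‖T x‖}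

/-- A densely defined operator is positive if it is self-adjoint and `⟨Tx, x⟩ ≥ 0` for all
`x ∈ D(T)`. -/
def IsPositivePMap (T : H →ₗ.[ℂ] H) : Prop :=
  IsSelfAdjoint T ∧ ∀ x : T.domain, 0 ≤ (⟪T x, (x : H)⟫_ℂ).re

/-- Cauchy–Schwarz for the nonnegative symmetric sesquilinear form `(x, y) ↦ ⟪T x, y⟫`. -/
theorem minMod_cs_aux (T : H →ₗ.[ℂ] H)
    (hsymm : ∀ x y : T.domain, ⟪T x, (y:H)⟫_ℂ = ⟪(x:H), T y⟫_ℂ)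
    (hpos : ∀ x : T.domain, 0 ≤ (⟪T x, (x:H)⟫_ℂ).re)
    (x y : T.domain) :
    ‖⟪T x, (y:H)⟫_ℂ‖ ^ 2 ≤ (⟪T x, (x:H)⟫_ℂ).re * (⟪T y, (y:H)⟫_ℂ).re := by
  set p : ℂ := ⟪T x, (y:H)⟫_ℂ with hp
  by_cases hp0 : p = 0
  · rw [hp0]
    simpa using mul_nonneg (hpos x) (hpos y)
  set c : ℂ := (‖p‖ : ℂ) / p with hc
  have hcp : c * p = (‖p‖ : ℂ) := div_mul_cancel₀ _ hp0
  have hcc : (starRingEnd ℂ) c * c = 1 := by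
    rw [← Complex.normSq_eq_conj_mul_self]
    have : ‖c‖ = 1 := by
      rw [hc, norm_div, Complex.norm_real, norm_norm, div_self (norm_ne_zero_iff.mpr hp0)]
    rw [Complex.normSq_eq_norm_sq, this]
    norm_num
  set y' : T.domain := c • y with hy'
  have key : ∀ t : ℝ, 0 ≤ (⟪T y, (y:H)⟫_ℂ).re * (t * t) + (2 * ‖p‖) * t
      + (⟪T x, (x:H)⟫_ℂ).re := by
    intro t
    have h0 := hpos (x + (t:ℂ) • y')
    have hT : T (x + (t:ℂ) • y') = T x + (t:ℂ) • T y' := by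
      rw [T.map_add, T.map_smul]
    have hcoe : ((x + (t:ℂ) • y' : T.domain) : H) = (x:H) + (t:ℂ) • (y':H) := by
      simp
    rw [hT, hcoe] at h0
    have hTy' : T y' = c • T y := T.map_smul c y
    have hy'H : ((y' : T.domain) : H) = c • (y : H) := rfl
    have hxy' : ⟪T x, ((y':T.domain):H)⟫_ℂ = (‖p‖ : ℂ) := by
      rw [hy'H, inner_smul_right, ← hp, hcp]
    have hy'x : ⟪T y', (x:H)⟫_ℂ = (‖p‖ : ℂ) := by
      rw [hsymm y' x, ← inner_conj_symm, hxy']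
      simp
    have hy'y' : ⟪T y', ((y':T.domain):H)⟫_ℂ = ⟪T y, (y:H)⟫_ℂ := by
      rw [hTy', hy'H, inner_smul_right, inner_smul_left, ← mul_assoc, mul_comm c, hcc, one_mul]
    have hexp : ⟪T x + (t:ℂ) • T y', (x:H) + (t:ℂ) • ((y':T.domain):H)⟫_ℂ
        = ⟪T x, (x:H)⟫_ℂ + ((2*t*‖p‖ : ℝ) : ℂ)
          + ((t*t : ℝ) : ℂ) * ⟪T y, (y:H)⟫_ℂ := by
      rw [inner_add_left, inner_add_right, inner_add_right, inner_smul_right,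
        inner_smul_left, inner_smul_left, inner_smul_right, hxy', hy'x, hy'y']
      push_cast
      simp [Complex.conj_ofReal]
      ring
    rw [hexp] at h0
    simp only [Complex.add_re, Complex.re_ofReal_mul, Complex.ofReal_re] at h0
    nlinarith [h0]
  have hd := discrim_le_zero key
  rw [discrim] at hd
  nlinarith [hd]

/-- A self-adjoint closed operator which is bounded below (with positive bound) is surjective. -/
theorem minMod_surj_aux (T : H →ₗ.[ℂ] H) (hdense : Dense (T.domain : Set H))
    (hclosed : T.IsClosed) (hsa : IsSelfAdjoint T) {m : ℝ} (hm : 0 < m)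
    (hlow : ∀ y : T.domain, m * ‖(y:H)‖ ≤ ‖T y‖) (u : H) :
    ∃ w : T.domain, T w = u := by
  set R : Submodule ℂ H := LinearMap.range T.toFun with hR
  have hmemR : ∀ v : H, v ∈ R ↔ ∃ w : T.domain, T w = v := by
    intro v
    simp [hR, LinearMap.mem_range]
  -- R is closed
  have hRclosed : IsClosed (R : Set H) := by
    rw [← isSeqClosed_iff_isClosed]
    intro f v hf hv
    choose y hy using fun n => (hmemR (f n)).mp (hf n)
    have hcf : CauchySeq f := hv.cauchySeq
    have hcg : CauchySeq (fun n => ((y n : H))) := by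
      rw [Metric.cauchySeq_iff] at hcf ⊢
      intro ε hε
      obtain ⟨N, hN⟩ := hcf (m * ε) (by positivity)
      refine ⟨N, fun a ha b hb => ?_⟩
      have h1 := hlow (y a - y b)
      have h2 : T (y a - y b) = f a - f b := by
        rw [T.map_sub, hy, hy]
      rw [h2] at h1
      have h3 : ((y a - y b : T.domain) : H) = (y a : H) - (y b : H) := rfl
      rw [h3] at h1
      have h4 := hN a ha b hb
      rw [dist_eq_norm] at h4 ⊢
      nlinarith [norm_nonneg ((y a : H) - (y b : H))]
    obtain ⟨w, hw⟩ := cauchySeq_tendsto_of_complete hcg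
    have hgraph : ∀ n, ((y n : H), f n) ∈ T.graph := by
      intro n
      rw [← hy n]
      exact T.mem_graph (y n)
    have hlim : (w, v) ∈ T.graph := by
      have := hclosed.mem_of_tendsto (hw.prodMk_nhds hv)
        (Filter.Eventually.of_forall hgraph)
      exact this
    rw [LinearPMap.mem_graph_iff] at hlim
    obtain ⟨z, hz1, hz2⟩ := hlim
    exact (hmemR v).mpr ⟨z, hz2⟩
  -- R is dense: orthogonal complement is trivial
  haveI : CompleteSpace R := hRclosed.completeSpace_coe
  have hRtop : R = ⊤ := by
    rw [← Submodule.orthogonal_eq_bot_iff]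
    rw [Submodule.eq_bot_iff]
    intro z hz
    rw [Submodule.mem_orthogonal] at hz
    have hz' : ∀ y : T.domain, ⟪T y, z⟫_ℂ = 0 := fun y =>
      hz (T y) ((hmemR (T y)).mpr ⟨y, rfl⟩)
    have hsa' : T.adjoint = T := hsa
    have hmem : z ∈ T.adjoint.domain := by
      apply LinearPMap.mem_adjoint_domain_of_exists
      exact ⟨0, fun y => by
        rw [inner_zero_left, ← inner_conj_symm z (T y), hz', map_zero]⟩
    have happ : T.adjoint ⟨z, hmem⟩ = 0 := by
      apply LinearPMap.adjoint_apply_eq hdense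
      intro y
      rw [inner_zero_left, ← inner_conj_symm z (T y), hz', map_zero]
    obtain ⟨w, hw1, hw2⟩ := LinearPMap.exists_of_le (le_of_eq hsa') ⟨z, hmem⟩
    have hzw : z = (w : H) := hw1
    have hTw : T w = 0 := by rw [← hw2, happ]
    have := hlow w
    rw [hTw, norm_zero] at this
    have hwz : ‖(w : H)‖ = 0 := by nlinarith [norm_nonneg ((w:H))]
    rw [hzw, ← norm_eq_zero]
    exact hwz
  have : u ∈ R := hRtop ▸ Submodule.mem_top
  exact (hmemR u).mp this

/-- For a densely defined closed positive operator `T`, the minimum modulus `m(T)` equals the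
lower numerical bound `m_T = inf {⟨Tx, x⟩ : x ∈ D(T), ‖x‖ = 1}`. -/
theorem minMod_eq_inf_inner (T : H →ₗ.[ℂ] H) (hdense : Dense (T.domain : Set H))
    (hclosed : T.IsClosed) (hpos : IsPositivePMap T) :
    minMod T = sInf {r : ℝ | ∃ x : T.domain, ‖(x : H)‖ = 1 ∧ r = (⟪T x, (x : H)⟫_ℂ).re} := by
  obtain ⟨hsa, hposv⟩ := hpos
  have hsymm : ∀ x y : T.domain, ⟪T x, (y:H)⟫_ℂ = ⟪(x:H), T y⟫_ℂ := by
    have hsa' : T.adjoint = T := hsa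
    have h := T.adjoint_isFormalAdjoint hdense
    rw [hsa'] at h
    exact h
  rw [minMod]
  set A : Set ℝ := {r : ℝ | ∃ x : T.domain, ‖(x : H)‖ = 1 ∧ r = ‖T x‖} with hA
  set B : Set ℝ := {r : ℝ | ∃ x : T.domain, ‖(x : H)‖ = 1 ∧ r = (⟪T x, (x : H)⟫_ℂ).re} with hB
  have hAbdd : BddBelow A := ⟨0, by rintro r ⟨x, hx, rfl⟩; exact norm_nonneg _⟩
  have hBbdd : BddBelow B := ⟨0, by rintro r ⟨x, hx, rfl⟩; exact hposv x⟩
  by_cases hne : ∃ x : T.domain, ‖(x : H)‖ = 1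
  swap
  · have hAe : A = ∅ := by
      rw [Set.eq_empty_iff_forall_notMem]
      rintro r ⟨x, hx, -⟩
      exact hne ⟨x, hx⟩
    have hBe : B = ∅ := by
      rw [Set.eq_empty_iff_forall_notMem]
      rintro r ⟨x, hx, -⟩
      exact hne ⟨x, hx⟩
    rw [hAe, hBe]
  obtain ⟨x₀, hx₀⟩ := hne
  have hAne : A.Nonempty := ⟨‖T x₀‖, x₀, hx₀, rfl⟩
  have hBne : B.Nonempty := ⟨(⟪T x₀, (x₀ : H)⟫_ℂ).re, x₀, hx₀, rfl⟩
  apply le_antisymm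
  · -- hard direction : sInf A ≤ sInf B
    apply le_csInf hBne
    rintro r ⟨x, hx1, rfl⟩
    by_contra hlt
    push_neg at hlt
    have hm0 : 0 < sInf A := lt_of_le_of_lt (hposv x) hlt
    have hlow : ∀ y : T.domain, sInf A * ‖(y:H)‖ ≤ ‖T y‖ := by
      intro y
      by_cases h0 : (y : H) = 0
      · have hy0 : y = 0 := Subtype.ext h0
        rw [hy0]
        simp
      · set u : T.domain := ((‖(y:H)‖⁻¹ : ℝ) : ℂ) • y with hu
        have hu1 : ‖(u : H)‖ = 1 := by
          have : ((u : T.domain) : H) = ((‖(y:H)‖⁻¹ : ℝ) : ℂ) • (y : H) := rfl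
          rw [this, norm_smul, Complex.norm_real, norm_inv, norm_norm,
            inv_mul_cancel₀ (norm_ne_zero_iff.mpr h0)]
        have hTu : ‖T u‖ = ‖(y:H)‖⁻¹ * ‖T y‖ := by
          rw [hu, T.map_smul, norm_smul, Complex.norm_real, norm_inv, norm_norm]
        have h1 : sInf A ≤ ‖T u‖ := csInf_le hAbdd ⟨u, hu1, rfl⟩
        rw [hTu] at h1
        have hy0 : 0 < ‖(y:H)‖ := norm_pos_iff.mpr h0
        calc sInf A * ‖(y:H)‖ ≤ (‖(y:H)‖⁻¹ * ‖T y‖) * ‖(y:H)‖ := by nlinarith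
          _ = ‖T y‖ := by field_simp
    obtain ⟨w, hw⟩ := minMod_surj_aux T hdense hclosed hsa hm0 hlow (x : H)
    have hp : ⟪T x, (w:H)⟫_ℂ = ⟪(x:H), (x:H)⟫_ℂ := by rw [hsymm x w, hw]
    have hp1 : ‖⟪T x, (w:H)⟫_ℂ‖ = 1 := by
      rw [hp, inner_self_eq_norm_sq_to_K]
      simp [hx1]
    have hcs := minMod_cs_aux T hsymm hposv x w
    rw [hp1, one_pow] at hcs
    have hreb : (⟪T w, (w:H)⟫_ℂ).re ≤ ‖T w‖ * ‖(w:H)‖ := by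
      calc (⟪T w, (w:H)⟫_ℂ).re ≤ ‖⟪T w, (w:H)⟫_ℂ‖ :=
            Complex.re_le_norm _
        _ ≤ ‖T w‖ * ‖(w:H)‖ := norm_inner_le_norm _ _
    have hTw1 : ‖T w‖ = 1 := by rw [hw]; exact hx1
    have hwle : ‖(w:H)‖ ≤ (sInf A)⁻¹ := by
      have h := hlow w
      rw [hTw1] at h
      rw [← one_div, le_div_iff₀ hm0, mul_comm]
      exact h
    have hbw : (⟪T w, (w:H)⟫_ℂ).re ≤ (sInf A)⁻¹ := by
      rw [hTw1, one_mul] at hreb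
      exact hreb.trans hwle
    have hinv : 0 < (sInf A)⁻¹ := by positivity
    have hcancel : sInf A * (sInf A)⁻¹ = 1 := mul_inv_cancel₀ (ne_of_gt hm0)
    nlinarith [hposv x, hposv w, hcs, hbw, hlt, hinv, hcancel]
  · -- easy direction : sInf B ≤ sInf A
    apply le_csInf hAne
    rintro r ⟨x, hx1, rfl⟩
    have h1 : sInf B ≤ (⟪T x, (x:H)⟫_ℂ).re := csInf_le hBbdd ⟨x, hx1, rfl⟩
    have h2 : (⟪T x, (x:H)⟫_ℂ).re ≤ ‖T x‖ := by
      calc (⟪T x, (x:H)⟫_ℂ).re ≤ ‖⟪T x, (x:H)⟫_ℂ‖ :=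
            Complex.re_le_norm _
        _ ≤ ‖T x‖ * ‖(x:H)‖ := norm_inner_le_norm _ _
        _ = ‖T x‖ := by rw [hx1, mul_one]
    exact h1.trans h2
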